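/- Let α', β' ∈ ℂ and let h : ℤ → ℂ be a sequence with h_n ≠ 0 for all n ∈ ℤ satisfying the second order nonlinear mapping h_{n-1} h_n h_{n+1} = α' h_n + β' for all n ∈ ℤ. Then the quantity J̃_n = h_{n-1} + h_n + α' (1/h_{n-1} + 1/h_n) + β'/(h_{n-1} h_n) is a conserved quantity, i.e. J̃_n is independent of n. -/

import Mathlib

/-- For a nonvanishing solution `h` of `h_{n-1} h_n h_{n+1} = α' h_n + β'`,
the quantity `J̃_n = h_{n-1} + h_n + α'(1/h_{n-1} + 1/h_n) + β'/(h_{n-1} h_n)` is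
conserved. -/
theorem h_map_conserved_J (α' β' : ℂ) (h : ℤ → ℂ)
    (hne : ∀ n : ℤ, h n ≠ 0)
    (hmap : ∀ n : ℤ, h (n - 1) * h n * h (n + 1) = α' * h n + β')
    (J : ℤ → ℂ)
    (hJ : ∀ n : ℤ, J n = h (n - 1) + h n + α' * (1 / h (n - 1) + 1 / h n)
      + β' / (h (n - 1) * h n)) :
    ∀ m n : ℤ, J m = J n := by
  have step : ∀ n : ℤ, J (n + 1) = J n := by
    intro n
    have hm := hmap n
    have h1 := hne (n - 1)
    have h2 := hne n
    have h3 := hne (n + 1)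
    rw [hJ, hJ]
    simp only [add_sub_cancel_right]
    field_simp
    linear_combination (h (n + 1) - h (n - 1)) * hm
  have key : ∀ n : ℤ, J n = J 0 := by
    intro n
    induction n using Int.induction_on with
    | zero => rfl
    | succ k ih => rw [step k, ih]
    | pred k ih =>
      have := step (-(k : ℤ) - 1)
      simp at this
      rw [show (-(k : ℤ) - 1) = -(k + 1 : ℤ) by ring] at *
      rw [← ih, ← this]
  intro m n; rw [key m, key n]
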